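/- Fix a unit self-dual matrix x_J (‖x_J‖² normalized so that x_J corresponds to a complex structure J on ℝ⁴). A 2-plane spanned by orthonormal vectors ξ, η ∈ ℝ⁴ is Lagrangian with respect to the Kähler form ω_J(ξ,η) = ⟨Jξ, η⟩, i.e. ω_J(ξ,η) = 0, if and only if the self-dual part P₊(ξ∧η) of the corresponding decomposable matrix F = ξηᵀ − ηξᵀ is orthogonal to x_J: ⟨x_J, P₊F⟩ = 0. Consequently, under the bijection G(2,4) ≅ S²₊ × S²₋, the Lagrangian Grassmannian corresponds to S¹ × S²₋, where S¹ is the great circle in S²₊ orthogonal to x_J. -/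

import Mathlib

set_option maxHeartbeats 1600000
set_option linter.unreachableTactic false
set_option linter.unusedTactic false


open Matrix

/-- The Hodge star operator on (antisymmetric) real 4×4 matrices, determined by
`(⋆F)₁₂ = F₃₄`, `(⋆F)₁₃ = −F₂₄`, `(⋆F)₁₄ = F₂₃`, `(⋆F)₂₃ = F₁₄`,
`(⋆F)₂₄ = −F₁₃`, `(⋆F)₃₄ = F₁₂` (indices here are 1-based). -/
def hodge (F : Matrix (Fin 4) (Fin 4) ℝ) : Matrix (Fin 4) (Fin 4) ℝ :=
  !![0, F 2 3, -(F 1 3), F 1 2;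
     -(F 2 3), 0, F 0 3, -(F 0 2);
     F 1 3, -(F 0 3), 0, F 0 1;
     -(F 1 2), F 0 2, -(F 0 1), 0]

/-- The inner product `⟨F,G⟩ = Σ_{i<j} F_{ij} G_{ij}` on 4×4 matrices. -/
def inner2 (F G : Matrix (Fin 4) (Fin 4) ℝ) : ℝ :=
  ∑ i : Fin 4, ∑ j : Fin 4, if i < j then F i j * G i j else 0

/-- The projection `P₊ = ½(1 + ⋆)` onto self-dual matrices. -/
noncomputable def Pplus (F : Matrix (Fin 4) (Fin 4) ℝ) : Matrix (Fin 4) (Fin 4) ℝ :=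
  (1/2 : ℝ) • (F + hodge F)

/-- The projection `P₋ = ½(1 − ⋆)` onto anti-self-dual matrices. -/
noncomputable def Pminus (F : Matrix (Fin 4) (Fin 4) ℝ) : Matrix (Fin 4) (Fin 4) ℝ :=
  (1/2 : ℝ) • (F - hodge F)

lemma inner2_eq (F G : Matrix (Fin 4) (Fin 4) ℝ) :
    inner2 F G = F 0 1 * G 0 1 + F 0 2 * G 0 2 + F 0 3 * G 0 3
      + F 1 2 * G 1 2 + F 1 3 * G 1 3 + F 2 3 * G 2 3 := by
  simp [inner2, Fin.sum_univ_four]; ring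

lemma decomp_aux (x y z d e f : ℝ) (hPf : x*f - y*e + z*d = 0)
    (hne : ¬ (x = 0 ∧ y = 0 ∧ z = 0 ∧ d = 0 ∧ e = 0 ∧ f = 0)) :
    ∃ u v : Fin 4 → ℝ, !![0,x,y,z;-x,0,d,e;-y,-d,0,f;-z,-e,-f,0]
      = vecMulVec u v - vecMulVec v u := by
  rcases eq_or_ne x 0 with hx | hx
  rotate_left
  · exact ⟨![0,x,y,z], ![-1,0,d/x,e/x], by
      ext i j; fin_cases i <;> fin_cases j <;>
        simp [vecMulVec_apply] <;> field_simp <;> (first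
          | linarith [hPf]
          | linear_combination x*hPf | linear_combination (-x)*hPf
          | linear_combination y*hPf | linear_combination (-y)*hPf
          | linear_combination z*hPf | linear_combination (-z)*hPf
          | linear_combination d*hPf | linear_combination (-d)*hPf
          | linear_combination e*hPf | linear_combination (-e)*hPf
          | linear_combination f*hPf | linear_combination (-f)*hPf)⟩
  rcases eq_or_ne y 0 with hy | hy
  rotate_left
  · exact ⟨![0,x,y,z], ![-1,-d/y,0,f/y], by
      ext i j; fin_cases i <;> fin_cases j <;>
        simp [vecMulVec_apply] <;> field_simp <;> (first
          | linarith [hPf]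
          | linear_combination x*hPf | linear_combination (-x)*hPf
          | linear_combination y*hPf | linear_combination (-y)*hPf
          | linear_combination z*hPf | linear_combination (-z)*hPf
          | linear_combination d*hPf | linear_combination (-d)*hPf
          | linear_combination e*hPf | linear_combination (-e)*hPf
          | linear_combination f*hPf | linear_combination (-f)*hPf)⟩
  rcases eq_or_ne z 0 with hz | hz
  rotate_left
  · exact ⟨![0,x,y,z], ![-1,-e/z,-f/z,0], by
      ext i j; fin_cases i <;> fin_cases j <;>
        simp [vecMulVec_apply] <;> field_simp <;> (first
          | linarith [hPf]
          | linear_combination x*hPf | linear_combination (-x)*hPf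
          | linear_combination y*hPf | linear_combination (-y)*hPf
          | linear_combination z*hPf | linear_combination (-z)*hPf
          | linear_combination d*hPf | linear_combination (-d)*hPf
          | linear_combination e*hPf | linear_combination (-e)*hPf
          | linear_combination f*hPf | linear_combination (-f)*hPf)⟩
  rcases eq_or_ne d 0 with hd | hd
  rotate_left
  · exact ⟨![-x,0,d,e], ![-y/d,-1,0,f/d], by
      ext i j; fin_cases i <;> fin_cases j <;>
        simp [vecMulVec_apply] <;> field_simp <;> (first
          | linarith [hPf]
          | linear_combination x*hPf | linear_combination (-x)*hPf
          | linear_combination y*hPf | linear_combination (-y)*hPf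
          | linear_combination z*hPf | linear_combination (-z)*hPf
          | linear_combination d*hPf | linear_combination (-d)*hPf
          | linear_combination e*hPf | linear_combination (-e)*hPf
          | linear_combination f*hPf | linear_combination (-f)*hPf)⟩
  rcases eq_or_ne e 0 with he | he
  rotate_left
  · exact ⟨![-x,0,d,e], ![-z/e,-1,-f/e,0], by
      ext i j; fin_cases i <;> fin_cases j <;>
        simp [vecMulVec_apply] <;> field_simp <;> (first
          | linarith [hPf]
          | linear_combination x*hPf | linear_combination (-x)*hPf
          | linear_combination y*hPf | linear_combination (-y)*hPf
          | linear_combination z*hPf | linear_combination (-z)*hPf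
          | linear_combination d*hPf | linear_combination (-d)*hPf
          | linear_combination e*hPf | linear_combination (-e)*hPf
          | linear_combination f*hPf | linear_combination (-f)*hPf)⟩
  rcases eq_or_ne f 0 with hf | hf
  rotate_left
  · exact ⟨![-y,-d,0,f], ![-z/f,-e/f,-1,0], by
      ext i j; fin_cases i <;> fin_cases j <;>
        simp [vecMulVec_apply] <;> field_simp <;> (first
          | linarith [hPf]
          | linear_combination x*hPf | linear_combination (-x)*hPf
          | linear_combination y*hPf | linear_combination (-y)*hPf
          | linear_combination z*hPf | linear_combination (-z)*hPf
          | linear_combination d*hPf | linear_combination (-d)*hPf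
          | linear_combination e*hPf | linear_combination (-e)*hPf
          | linear_combination f*hPf | linear_combination (-f)*hPf)⟩
  exact absurd ⟨hx, hy, hz, hd, he, hf⟩ hne

lemma sd_form (p : Matrix (Fin 4) (Fin 4) ℝ) (h : hodge p = p) :
    ∃ x y z, p = !![0,x,y,z; -x,0,z,-y; -y,-z,0,x; -z,y,-x,0] := by
  have k := fun i j => congr_fun (congr_fun h i) j
  have k00 := k 0 0; have k01 := k 0 1; have k02 := k 0 2; have k03 := k 0 3
  have k10 := k 1 0; have k11 := k 1 1; have k13 := k 1 3
  have k20 := k 2 0; have k21 := k 2 1; have k22 := k 2 2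
  have k30 := k 3 0; have k31 := k 3 1; have k32 := k 3 2; have k33 := k 3 3
  simp [hodge] at k00 k01 k02 k03 k10 k11 k13 k20 k21 k22 k30 k31 k32 k33
  refine ⟨p 0 1, p 0 2, p 0 3, ?_⟩
  ext i j
  fin_cases i <;> fin_cases j <;> simp <;>
    linarith [k00, k01, k02, k03, k10, k11, k13, k20, k21, k22, k30, k31, k32, k33]

lemma asd_form (q : Matrix (Fin 4) (Fin 4) ℝ) (h : hodge q = -q) :
    ∃ x y z, q = !![0,x,y,z; -x,0,-z,y; -y,z,0,-x; -z,-y,x,0] := by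
  have k := fun i j => congr_fun (congr_fun h i) j
  have k00 := k 0 0; have k01 := k 0 1; have k02 := k 0 2; have k03 := k 0 3
  have k10 := k 1 0; have k11 := k 1 1; have k13 := k 1 3
  have k20 := k 2 0; have k21 := k 2 1; have k22 := k 2 2
  have k30 := k 3 0; have k31 := k 3 1; have k32 := k 3 2; have k33 := k 3 3
  simp [hodge] at k00 k01 k02 k03 k10 k11 k13 k20 k21 k22 k30 k31 k32 k33
  refine ⟨q 0 1, q 0 2, q 0 3, ?_⟩
  ext i j
  fin_cases i <;> fin_cases j <;> simp <;>
    linarith [k00, k01, k02, k03, k10, k11, k13, k20, k21, k22, k30, k31, k32, k33]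

lemma Pplus_transpose (u v : Fin 4 → ℝ) :
    (Pplus (vecMulVec u v - vecMulVec v u))ᵀ = -(Pplus (vecMulVec u v - vecMulVec v u)) := by
  ext i j
  fin_cases i <;> fin_cases j <;>
    simp [Pplus, hodge, vecMulVec_apply, Matrix.sub_apply, Matrix.add_apply, Matrix.smul_apply,
      transpose_apply, Matrix.neg_apply] <;> ring

lemma Pplus_hodge (u v : Fin 4 → ℝ) :
    hodge (Pplus (vecMulVec u v - vecMulVec v u)) = Pplus (vecMulVec u v - vecMulVec v u) := by
  ext i j
  fin_cases i <;> fin_cases j <;>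
    simp [Pplus, hodge, vecMulVec_apply, Matrix.sub_apply, Matrix.add_apply, Matrix.smul_apply, Matrix.neg_apply] <;> ring

lemma Pplus_norm (u v : Fin 4 → ℝ) :
    inner2 (Pplus (vecMulVec u v - vecMulVec v u)) (Pplus (vecMulVec u v - vecMulVec v u))
      = 1/2 * inner2 (vecMulVec u v - vecMulVec v u) (vecMulVec u v - vecMulVec v u) := by
  simp [inner2_eq, Pplus, hodge, vecMulVec_apply, Matrix.sub_apply, Matrix.add_apply, Matrix.smul_apply]
  ring

lemma Pminus_transpose (u v : Fin 4 → ℝ) :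
    (Pminus (vecMulVec u v - vecMulVec v u))ᵀ = -(Pminus (vecMulVec u v - vecMulVec v u)) := by
  ext i j
  fin_cases i <;> fin_cases j <;>
    simp [Pminus, hodge, vecMulVec_apply, Matrix.sub_apply, Matrix.add_apply, Matrix.smul_apply,
      transpose_apply, Matrix.neg_apply] <;> ring

lemma Pminus_hodge (u v : Fin 4 → ℝ) :
    hodge (Pminus (vecMulVec u v - vecMulVec v u)) = -(Pminus (vecMulVec u v - vecMulVec v u)) := by
  ext i j
  fin_cases i <;> fin_cases j <;>
    simp [Pminus, hodge, vecMulVec_apply, Matrix.sub_apply, Matrix.add_apply, Matrix.smul_apply, Matrix.neg_apply] <;> ring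

lemma Pminus_norm (u v : Fin 4 → ℝ) :
    inner2 (Pminus (vecMulVec u v - vecMulVec v u)) (Pminus (vecMulVec u v - vecMulVec v u))
      = 1/2 * inner2 (vecMulVec u v - vecMulVec v u) (vecMulVec u v - vecMulVec v u) := by
  simp [inner2_eq, Pminus, hodge, vecMulVec_apply, Matrix.sub_apply, Matrix.add_apply, Matrix.smul_apply]
  ring

lemma xJ_Pplus (a b c : ℝ) (G : Matrix (Fin 4) (Fin 4) ℝ) :
    inner2 !![0, a, b, c; -a, 0, c, -b; -b, -c, 0, a; -c, b, -a, 0] (Pplus G)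
      = inner2 !![0, a, b, c; -a, 0, c, -b; -b, -c, 0, a; -c, b, -a, 0] G := by
  simp [inner2_eq, Pplus, hodge, Matrix.add_apply, Matrix.smul_apply]
  ring

/-- fix a unit self-dual `x_J` (with coordinates `(a,b,c)`,
`a² + b² + c² = 1`) corresponding to the complex structure `J`.  A 2-plane spanned by
orthonormal `ξ, η` is Lagrangian for `ω_J(ξ,η) = ⟨Jξ,η⟩` iff `⟨x_J, P₊(ξ∧η)⟩ = 0`;
consequently, under `G(2,4) ≅ S²₊ × S²₋`, the Lagrangian Grassmannian corresponds to
`S¹ × S²₋` with `S¹` the great circle of `S²₊` orthogonal to `x_J`. -/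
theorem stmt_7 (a b c : ℝ) (hunit : a ^ 2 + b ^ 2 + c ^ 2 = 1)
    (xJ J : Matrix (Fin 4) (Fin 4) ℝ)
    (hxJ : xJ = !![0, a, b, c;
                   -a, 0, c, -b;
                   -b, -c, 0, a;
                   -c, b, -a, 0])
    (hJ : J = !![0, -a, -b, -c;
                 a, 0, -c, b;
                 b, c, 0, -a;
                 c, -b, a, 0]) :
    (∀ ξ η : Fin 4 → ℝ, ξ ⬝ᵥ ξ = 1 → η ⬝ᵥ η = 1 → ξ ⬝ᵥ η = 0 →
      ((J *ᵥ ξ) ⬝ᵥ η = 0 ↔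
        inner2 xJ (Pplus (Matrix.vecMulVec ξ η - Matrix.vecMulVec η ξ)) = 0)) ∧
    (fun F => (Pplus F, Pminus F)) ''
        {F | ((∃ u v : Fin 4 → ℝ, F = Matrix.vecMulVec u v - Matrix.vecMulVec v u) ∧
              inner2 F F = 1) ∧ inner2 xJ F = 0} =
      {p | (pᵀ = -p ∧ hodge p = p ∧ inner2 p p = 1/2) ∧ inner2 xJ p = 0} ×ˢ
      {q | qᵀ = -q ∧ hodge q = -q ∧ inner2 q q = 1/2} := by
  subst hxJ hJ
  constructor
  · intro ξ η _ _ _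
    have key : inner2 !![0, a, b, c; -a, 0, c, -b; -b, -c, 0, a; -c, b, -a, 0]
        (Pplus (Matrix.vecMulVec ξ η - Matrix.vecMulVec η ξ)) =
        (!![0, -a, -b, -c; a, 0, -c, b; b, c, 0, -a; c, -b, a, 0] *ᵥ ξ) ⬝ᵥ η := by
      simp [inner2_eq, Pplus, hodge, Matrix.sub_apply, Matrix.smul_apply, Matrix.add_apply,
        Matrix.vecMulVec_apply, mulVec, dotProduct, Fin.sum_univ_four]
      ring
    rw [key]
  · ext ⟨p, q⟩
    simp only [Set.mem_image, Set.mem_setOf_eq, Set.mem_prod, Prod.mk.injEq]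
    constructor
    · rintro ⟨F, ⟨⟨⟨u, v, rfl⟩, hnorm⟩, horth⟩, rfl, rfl⟩
      refine ⟨⟨⟨Pplus_transpose u v, Pplus_hodge u v, ?_⟩, ?_⟩,
        Pminus_transpose u v, Pminus_hodge u v, ?_⟩
      · rw [Pplus_norm, hnorm]; norm_num
      · rw [xJ_Pplus]; exact horth
      · rw [Pminus_norm, hnorm]; norm_num
    · rintro ⟨⟨⟨hpT, hph, hpn⟩, hpo⟩, hqT, hqh, hqn⟩
      obtain ⟨p1, p2, p3, rfl⟩ := sd_form p hph
      obtain ⟨q1, q2, q3, rfl⟩ := asd_form q hqh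
      simp only [inner2_eq] at hpn hqn hpo
      norm_num [Matrix.cons_val_zero, Matrix.cons_val_one, Matrix.cons_val_two, Matrix.cons_val_three, Matrix.head_cons, Matrix.tail_cons, Matrix.vecHead, Matrix.vecTail] at hpn hqn hpo
      refine ⟨!![0, p1+q1, p2+q2, p3+q3;
                 -(p1+q1), 0, p3-q3, -(p2-q2);
                 -(p2+q2), -(p3-q3), 0, p1-q1;
                 -(p3+q3), -(-(p2-q2)), -(p1-q1), 0], ⟨⟨?_, ?_⟩, ?_⟩, ?_, ?_⟩
      · apply decomp_aux
        · nlinarith [hpn, hqn]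
        · rintro ⟨h1, h2, h3, h4, h5, h6⟩
          have e1 : p1 = 0 := by linarith
          have e2 : p2 = 0 := by linarith
          have e3 : p3 = 0 := by linarith
          rw [e1, e2, e3] at hpn; norm_num at hpn
      · simp only [inner2_eq]; norm_num [Matrix.cons_val_zero, Matrix.cons_val_one, Matrix.cons_val_two, Matrix.cons_val_three, Matrix.head_cons, Matrix.tail_cons, Matrix.vecHead, Matrix.vecTail]; nlinarith [hpn, hqn]
      · simp only [inner2_eq]; norm_num [Matrix.cons_val_zero, Matrix.cons_val_one, Matrix.cons_val_two, Matrix.cons_val_three, Matrix.head_cons, Matrix.tail_cons, Matrix.vecHead, Matrix.vecTail]; nlinarith [hpo]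
      · ext i j
        fin_cases i <;> fin_cases j <;>
          simp [Pplus, hodge, Matrix.add_apply, Matrix.smul_apply] <;> ring
      · ext i j
        fin_cases i <;> fin_cases j <;>
          simp [Pminus, hodge, Matrix.sub_apply, Matrix.smul_apply] <;> ring
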